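/- Let a ∈ ℝ with −1 < a < 0. Then (15 − 8a + a²)/(a·(a+1)) < 0, and the unique real number c with c³ = (15 − 8a + a²)/(a·(a+1)) satisfies c < 0, the derivative of R_a at c is 0 (c is a free critical point of R_a), and the corresponding critical value is positive: R_a(c) > 0. -/

import Mathlib

/-- The real restriction of the rational map `R_a` to the real line. -/
noncomputable def RaR (a x : ℝ) : ℝ :=
  (2*a*x^6 + (15 - a)*x^3 + (3 - a)) / (3*x^2*(5 - a + (1 + a)*x^3))

/-- For real `a ∈ (-1,0)`: `(15-8a+a²)/(a(a+1)) < 0`, and the (unique) real cube root `c`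
of this quantity is negative, is a free critical point of `R_a` (`R_a'(c) = 0`), and its
critical value is positive (`R_a(c) > 0`). -/
theorem stmt_18 (a : ℝ) (ha1 : -1 < a) (ha0 : a < 0) :
    (15 - 8*a + a^2)/(a*(a+1)) < 0 ∧
    ∀ c : ℝ, c^3 = (15 - 8*a + a^2)/(a*(a+1)) →
      c < 0 ∧ deriv (RaR a) c = 0 ∧ 0 < RaR a c := by
  have hu : a*(a+1) < 0 := mul_neg_of_neg_of_pos ha0 (by linarith)
  have hune : a*(a+1) ≠ 0 := ne_of_lt hu
  have hm : 0 < 15 - 8*a + a^2 := by nlinarith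
  have hQ : (15 - 8*a + a^2)/(a*(a+1)) < 0 := div_neg_of_pos_of_neg hm hu
  refine ⟨hQ, ?_⟩
  intro c hc
  rw [eq_div_iff hune] at hc
  have hkey : a*(a+1)*c^3 = 15 - 8*a + a^2 := by linear_combination hc
  have hc3 : c^3 < 0 := by nlinarith
  have hcneg : c < 0 := by
    by_contra h
    push_neg at h
    nlinarith [pow_nonneg h 3]
  have hcne : c ≠ 0 := ne_of_lt hcneg
  have hc2 : 0 < c^2 := by positivity
  -- inner factor of denominator
  have hinner : a * (5 - a + (1 + a)*c^3) = 15 - 3*a := by linear_combination hkey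
  have hinner_neg : 5 - a + (1 + a)*c^3 < 0 := by
    nlinarith [hinner]
  have hDne : 3*c^2*(5 - a + (1 + a)*c^3) ≠ 0 := by
    have : 3*c^2*(5 - a + (1 + a)*c^3) < 0 :=
      mul_neg_of_pos_of_neg (by positivity) hinner_neg
    exact ne_of_lt this
  have hDneg : 3*c^2*(5 - a + (1 + a)*c^3) < 0 :=
    mul_neg_of_pos_of_neg (by positivity) hinner_neg
  -- derivative
  have hN : HasDerivAt (fun x : ℝ => 2*a*x^6 + (15 - a)*x^3 + (3 - a))
      (2*a*(6*c^5) + (15 - a)*(3*c^2)) c := by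
    have h6 := (hasDerivAt_pow 6 c).const_mul (2*a)
    have h3 := (hasDerivAt_pow 3 c).const_mul (15 - a)
    have := (h6.add h3).add_const (3 - a)
    exact this.congr_deriv (by norm_num <;> ring)
  have hD : HasDerivAt (fun x : ℝ => 3*x^2*(5 - a + (1 + a)*x^3))
      (3*(5 - a)*(2*c) + 3*(1 + a)*(5*c^4)) c := by
    have hfun : (fun x : ℝ => 3*x^2*(5 - a + (1 + a)*x^3))
        = fun x : ℝ => 3*(5 - a)*x^2 + 3*(1 + a)*x^5 := by
      funext x; ring
    rw [hfun]
    have h2 := (hasDerivAt_pow 2 c).const_mul (3*(5 - a))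
    have h5 := (hasDerivAt_pow 5 c).const_mul (3*(1 + a))
    have := h2.add h5
    exact this.congr_deriv (by norm_num <;> ring)
  have hR : HasDerivAt (RaR a)
      (((2*a*(6*c^5) + (15 - a)*(3*c^2)) * (3*c^2*(5 - a + (1 + a)*c^3))
        - (2*a*c^6 + (15 - a)*c^3 + (3 - a)) * (3*(5 - a)*(2*c) + 3*(1 + a)*(5*c^4)))
        / (3*c^2*(5 - a + (1 + a)*c^3))^2) c := hN.div hD hDne
  have hnum : (2*a*(6*c^5) + (15 - a)*(3*c^2)) * (3*c^2*(5 - a + (1 + a)*c^3))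
        - (2*a*c^6 + (15 - a)*c^3 + (3 - a)) * (3*(5 - a)*(2*c) + 3*(1 + a)*(5*c^4)) = 0 := by
    linear_combination (6*c*(c^3 - 1)^2) * hkey
  have hderiv : deriv (RaR a) c = 0 := by
    rw [hR.deriv, hnum, zero_div]
  -- positivity of the value
  have hNc : 2*a*c^6 + (15 - a)*c^3 + (3 - a) < 0 := by
    have hid : (a*(a+1))^2 * (2*a*c^6 + (15 - a)*c^3 + (3 - a))
        = -9*a^4 + 81*a^3 - 387*a^2 + 675*a := by
      linear_combination (2*a*(a*(a+1)*c^3 + (15 - 8*a + a^2)) + (15 - a)*(a*(a+1))) * hkey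
    nlinarith [sq_nonneg (a*(a+1)), hid, mul_pos (mul_pos (neg_pos.mpr ha0) (neg_pos.mpr ha0)) (neg_pos.mpr ha0)]
  have hval : 0 < RaR a c := by
    unfold RaR
    exact div_pos_of_neg_of_neg hNc hDneg
  exact ⟨hcneg, hderiv, hval⟩
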